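/- The map α ↦ α̂, which replaces every maximal block of consecutive parts equal to 1 (not occurring at the end) by their sum added to the next part to the right, and merges a trailing block of 1's into a single last part, is a surjection from the set of compositions of n onto the set of peak compositions of n. -/

import Mathlib

/-- The collapsing map `α ↦ α̂`: each maximal run of consecutive parts equal to 1
is merged into the next part to the right (a trailing run of `r` ones becomes a
single part `r`). -/
def collapse : List ℕ → List ℕ
  | [] => []
  | 1 :: rest =>
    match collapse rest with
    | [] => [1]
    | b :: t => (b + 1) :: t
  | a :: rest => a :: collapse rest

/-- A peak composition: all parts except possibly the last exceed 1. -/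
def IsPeakComp (l : List ℕ) : Prop :=
  (∀ x ∈ l, 0 < x) ∧ ∀ i, i + 1 < l.length → 1 < l.getD i 0

lemma collapse_sum (l : List ℕ) : (collapse l).sum = l.sum := by
  induction l with
  | nil => rfl
  | cons a rest ih =>
    match a with
    | 0 => simp [collapse, ih]
    | 1 =>
      simp only [collapse]
      cases h : collapse rest with
      | nil => simp [← ih, h]
      | cons b t => simp [← ih, h]; ring
    | (a+2) => simp [collapse, ih]

lemma collapse_peak (l : List ℕ) (hp : ∀ x ∈ l, 0 < x) : IsPeakComp (collapse l) := by
  induction l with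
  | nil => exact ⟨by simp [collapse], by simp [collapse]⟩
  | cons a rest ih =>
    have hrest : ∀ x ∈ rest, 0 < x := fun x hx => hp x (List.mem_cons_of_mem _ hx)
    obtain ⟨ih1, ih2⟩ := ih hrest
    match a with
    | 0 => exact absurd (hp 0 (List.mem_cons_self)) (by simp)
    | 1 =>
      simp only [collapse]
      cases h : collapse rest with
      | nil =>
        exact ⟨by simp, by simp⟩
      | cons b t =>
        rw [h] at ih1 ih2
        constructor
        · intro x hx
          rcases List.mem_cons.mp hx with rfl | hx
          · omega
          · exact ih1 x (List.mem_cons_of_mem _ hx)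
        · intro i hi
          match i with
          | 0 =>
            have hb : 0 < b := ih1 b (List.mem_cons_self)
            simpa using by omega
          | (j+1) =>
            have := ih2 (j+1) (by simpa using hi)
            simpa using this
    | (a+2) =>
      simp only [collapse]
      rw [show collapse rest = collapse rest from rfl]
      constructor
      · intro x hx
        rcases List.mem_cons.mp hx with rfl | hx
        · omega
        · exact ih1 x hx
      · intro i hi
        match i with
        | 0 => simp
        | (j+1) =>
          have := ih2 j (by simpa using hi)
          simpa using this

lemma collapse_fix (p : List ℕ) (hp : IsPeakComp p) : collapse p = p := by
  induction p with
  | nil => rfl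
  | cons a rest ih =>
    obtain ⟨h1, h2⟩ := hp
    have ha : 0 < a := h1 a (List.mem_cons_self)
    have hrest : IsPeakComp rest := by
      refine ⟨fun x hx => h1 x (List.mem_cons_of_mem _ hx), fun i hi => ?_⟩
      have := h2 (i+1) (by simpa using hi)
      simpa using this
    match a, ha with
    | 1, _ =>
      have : rest = [] := by
        cases rest with
        | nil => rfl
        | cons b t =>
          have := h2 0 (by simp)
          simp at this
      subst this
      rfl
    | (a+2), _ =>
      simp only [collapse]
      rw [ih hrest]

/-- The map `α ↦ α̂` is a surjection from compositions of `n` onto peak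
compositions of `n`. -/
theorem stmt7 (n : ℕ) :
    (∀ l : List ℕ, (∀ x ∈ l, 0 < x) → l.sum = n →
      (collapse l).sum = n ∧ IsPeakComp (collapse l)) ∧
    (∀ p : List ℕ, IsPeakComp p → p.sum = n →
      ∃ l : List ℕ, (∀ x ∈ l, 0 < x) ∧ l.sum = n ∧ collapse l = p) := by
  constructor
  · intro l hl hsum
    exact ⟨by rw [collapse_sum, hsum], collapse_peak l hl⟩
  · intro p hp hsum
    exact ⟨p, hp.1, hsum, collapse_fix p hp⟩
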